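/- Let M be a matroid on E, and L ⊆ E such that the restriction M|L is 2-connected with r(L) ≥ 1. If a : E → ℝ is a function such that the sum of a over B is constant over all bases B of M with |B ∩ L| = r(L), and suppose additionally every element of L lies in some such basis, then a is constant on L. -/

import Mathlib

open Matroid Set

/-- The rank of a set `X` in a matroid `M`: the largest cardinality of an
independent subset of `X`. -/
noncomputable def mrank {α : Type*} (M : Matroid α) (X : Set α) : ℕ :=
  sSup {n | ∃ I, M.Indep I ∧ I ⊆ X ∧ I.ncard = n}

/-- A matroid is 2-connected (nonseparable) if its ground set cannot be
partitioned into two nonempty sets whose ranks sum to the rank of the whole. -/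
def TwoConnected {α : Type*} (M : Matroid α) : Prop :=
  ¬ ∃ A B : Set α, A.Nonempty ∧ B.Nonempty ∧ Disjoint A B ∧ A ∪ B = M.E ∧
      mrank M A + mrank M B = mrank M M.E

/-- A subset `L` of the ground set is locked in `M` if `M|L` is 2-connected,
`M✶|(E \ L)` is 2-connected, and `min (r L) (r✶ (E \ L)) ≥ 2`. -/
def Locked {α : Type*} (M : Matroid α) (L : Set α) : Prop :=
  L ⊆ M.E ∧ TwoConnected (M ↾ L) ∧ TwoConnected (M✶ ↾ (M.E \ L)) ∧
    2 ≤ mrank M L ∧ 2 ≤ mrank M✶ (M.E \ L)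

section Aux

variable {α : Type*} {M : Matroid α} {X L I J C D : Set α}

lemma mrank_eq_ncard_of_basis (hfin : M.E.Finite) (hI : M.IsBasis I X) :
    mrank M X = I.ncard := by
  have hub : ∀ n ∈ {n | ∃ J, M.Indep J ∧ J ⊆ X ∧ J.ncard = n}, n ≤ I.ncard := by
    rintro n ⟨J, hJ, hJX, rfl⟩
    obtain ⟨J', hJ', hJJ'⟩ := hJ.subset_isBasis_of_subset hJX hI.subset_ground
    have hle : J.encard ≤ I.encard :=
      le_trans (encard_mono hJJ') (hJ'.encard_eq_encard hI).le
    rw [ncard_def, ncard_def]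
    exact ENat.toNat_le_toNat hle (hfin.subset hI.indep.subset_ground).encard_lt_top.ne
  refine le_antisymm (csSup_le ⟨I.ncard, I, hI.indep, hI.subset, rfl⟩ hub)
    (le_csSup ⟨I.ncard, hub⟩ ⟨I, hI.indep, hI.subset, rfl⟩)

lemma mrank_restrict_eq (hXL : X ⊆ L) : mrank (M ↾ L) X = mrank M X := by
  have h : {n | ∃ I, (M ↾ L).Indep I ∧ I ⊆ X ∧ I.ncard = n}
      = {n | ∃ I, M.Indep I ∧ I ⊆ X ∧ I.ncard = n} := by
    ext n
    simp only [restrict_indep_iff, mem_setOf_eq]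
    exact ⟨fun ⟨I, ⟨h1, _⟩, h3, h4⟩ => ⟨I, h1, h3, h4⟩,
      fun ⟨I, h1, h3, h4⟩ => ⟨I, ⟨h1, h3.trans hXL⟩, h3, h4⟩⟩
  rw [mrank, mrank, h]

/-- existence of a minimal dependent subset of a finite dependent set -/
lemma exists_min_dep (hfin : M.E.Finite) (hD : ¬ M.Indep D) (hDE : D ⊆ M.E) :
    ∃ C, C ⊆ D ∧ (¬ M.Indep C) ∧ ∀ x ∈ C, M.Indep (C \ {x}) := by
  have hDfin : D.Finite := hfin.subset hDE
  set S : Set ℕ := {m | ∃ C, C ⊆ D ∧ ¬ M.Indep C ∧ C.ncard = m} with hS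
  have hSne : S.Nonempty := ⟨D.ncard, D, Subset.rfl, hD, rfl⟩
  obtain ⟨C, hCD, hCdep, hCcard⟩ := Nat.sInf_mem hSne
  refine ⟨C, hCD, hCdep, fun x hx => ?_⟩
  by_contra hdep
  have hlt : (C \ {x}).ncard < C.ncard :=
    ncard_lt_ncard (sdiff_singleton_ssubset.mpr hx) (hDfin.subset hCD)
  have : sInf S ≤ (C \ {x}).ncard :=
    Nat.sInf_le ⟨C \ {x}, (diff_subset).trans hCD, hdep, rfl⟩
  omega

/-- The exchange argument: elements of a "circuit" contained in `L` all
have the same `a`-value. -/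
lemma key_exchange (hfin : M.E.Finite) (hL : L ⊆ M.E) {a : α → ℝ} {c : ℝ}
    (hconst : ∀ B, M.IsBase B → (B ∩ L).ncard = mrank M L → ∑ᶠ e ∈ B, a e = c)
    (hCdep : ¬ M.Indep C) (hCL : C ⊆ L)
    (hmin : ∀ x ∈ C, M.Indep (C \ {x}))
    {j k : α} (hj : j ∈ C) (hk : k ∈ C) (hjk : j ≠ k) : a j = a k := by
  have hCk : M.Indep (C \ {k}) := hmin k hk
  obtain ⟨I, hI, hCkI⟩ := hCk.subset_isBasis_of_subset ((diff_subset).trans hCL) hL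
  obtain ⟨B, hB, hIB⟩ := hI.indep.exists_isBase_superset
  have hBL : I = B ∩ L :=
    hI.eq_of_subset_indep (hB.indep.inter_right L)
      (subset_inter hIB hI.subset) inter_subset_right
  have hkB : k ∉ B := by
    intro hkB
    refine hCdep (hB.indep.subset fun x hx => ?_)
    rcases eq_or_ne x k with rfl | hne
    · exact hkB
    · exact hIB (hCkI ⟨hx, hne⟩)
  have hjI : j ∈ I := hCkI ⟨hj, hjk⟩
  have hjB : j ∈ B := hIB hjI
  have hjcl : j ∈ M.closure (C \ {j}) := by
    by_contra h
    have hi : M.Indep (insert j (C \ {j})) := by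
      rw [(hmin j hj).insert_indep_iff_of_notMem (by simp)]
      exact ⟨hL (hCL hj), h⟩
    rw [insert_diff_singleton, insert_eq_of_mem hj] at hi
    exact hCdep hi
  have hkcl : k ∉ M.closure (B \ {j}) := by
    intro hkcl
    have h1 : C \ {j} ⊆ insert k (B \ {j}) := by
      intro x hx
      rcases eq_or_ne x k with rfl | hne
      · exact mem_insert _ _
      · exact Or.inr ⟨hIB (hCkI ⟨hx.1, hne⟩), hx.2⟩
    have h2 : j ∈ M.closure (insert k (B \ {j})) :=
      M.closure_subset_closure h1 hjcl
    rw [closure_insert_eq_of_mem_closure hkcl] at h2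
    exact hB.indep.notMem_closure_diff_of_mem hjB h2
  have hB'indep : M.Indep (insert k (B \ {j})) := by
    rw [(hB.indep.subset diff_subset).insert_indep_iff_of_notMem
      (fun h => hkB h.1)]
    exact ⟨hL (hCL hk), hkcl⟩
  have hB' : M.IsBase (insert k (B \ {j})) := hB.exchange_isBase_of_indep hkB hB'indep
  have hBfin : B.Finite := hfin.subset hB.subset_ground
  have hIfin : I.Finite := hfin.subset hI.indep.subset_ground
  have hBL' : (insert k (B \ {j})) ∩ L = insert k (I \ {j}) := by
    rw [hBL]
    ext x
    simp only [mem_insert_iff, mem_inter_iff, mem_diff, mem_singleton_iff]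
    constructor
    · rintro ⟨(rfl | ⟨hxB, hxj⟩), hxL⟩
      · exact Or.inl rfl
      · exact Or.inr ⟨⟨hxB, hxL⟩, hxj⟩
    · rintro (rfl | ⟨⟨hxB, hxL⟩, hxj⟩)
      · exact ⟨Or.inl rfl, hCL hk⟩
      · exact ⟨Or.inr ⟨hxB, hxj⟩, hxL⟩
  have hcard' : (insert k (I \ {j})).ncard = I.ncard := by
    rw [ncard_insert_of_notMem (fun h => hkB (hIB h.1)) (hIfin.diff),
      ncard_diff_singleton_add_one hjI hIfin]
  have hmrankL : mrank M L = I.ncard := mrank_eq_ncard_of_basis hfin hI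
  have sum1 : ∑ᶠ e ∈ B, a e = c := hconst B hB (by rw [← hBL, hmrankL])
  have sum2 : ∑ᶠ e ∈ insert k (B \ {j}), a e = c :=
    hconst _ hB' (by rw [hBL', hcard', hmrankL])
  have e1 : ∑ᶠ e ∈ B, a e = a j + ∑ᶠ e ∈ B \ {j}, a e := by
    conv_lhs => rw [← insert_eq_of_mem hjB, ← insert_diff_singleton]
    exact finsum_mem_insert a (by simp) (hBfin.diff)
  have e2 : ∑ᶠ e ∈ insert k (B \ {j}), a e = a k + ∑ᶠ e ∈ B \ {j}, a e :=
    finsum_mem_insert a (fun h => hkB h.1) (hBfin.diff)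
  have : a j + ∑ᶠ e ∈ B \ {j}, a e = a k + ∑ᶠ e ∈ B \ {j}, a e := by
    rw [← e1, ← e2, sum1, sum2]
  exact add_right_cancel this

end Aux

theorem stmt6 {α : Type*} (M : Matroid α) (hfin : M.E.Finite) (L : Set α) (hL : L ⊆ M.E)
    (h2c : TwoConnected (M ↾ L)) (hr : 1 ≤ mrank M L)
    (a : α → ℝ) (c : ℝ)
    (hconst : ∀ B, M.IsBase B → (B ∩ L).ncard = mrank M L → ∑ᶠ e ∈ B, a e = c)
    (hcover : ∀ e ∈ L, ∃ B, M.IsBase B ∧ (B ∩ L).ncard = mrank M L ∧ e ∈ B) :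
    ∀ j ∈ L, ∀ k ∈ L, a j = a k := by
  intro j hj k hk
  by_contra hne
  set A : Set α := {e ∈ L | a e = a j} with hA
  set Bs : Set α := {e ∈ L | a e ≠ a j} with hBs
  have hAL : A ⊆ L := fun x hx => hx.1
  have hBsL : Bs ⊆ L := fun x hx => hx.1
  have hABdisj : Disjoint A Bs := by
    rw [disjoint_left]
    rintro x ⟨_, hx⟩ ⟨_, hx'⟩
    exact hx' hx
  have hABunion : A ∪ Bs = L := by
    ext x
    constructor
    · rintro (hx | hx) <;> exact hx.1
    · intro hx
      by_cases h : a x = a j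
      · exact Or.inl ⟨hx, h⟩
      · exact Or.inr ⟨hx, h⟩
  obtain ⟨IA, hIA⟩ := M.exists_isBasis A (hAL.trans hL)
  obtain ⟨IB, hIB⟩ := M.exists_isBasis Bs (hBsL.trans hL)
  have hIAA : IA ⊆ A := hIA.subset
  have hIBB : IB ⊆ Bs := hIB.subset
  -- union is independent
  have hU : M.Indep (IA ∪ IB) := by
    by_contra hdep
    obtain ⟨C, hCD, hCdep, hmin⟩ := exists_min_dep hfin hdep
      (union_subset hIA.indep.subset_ground hIB.indep.subset_ground)
    have hCL : C ⊆ L := hCD.trans (union_subset (hIAA.trans hAL) (hIBB.trans hBsL))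
    -- C meets both A and Bs
    have hCA : ¬ C ⊆ A := by
      intro h
      refine hCdep (hIA.indep.subset fun x hx => ?_)
      rcases hCD hx with hxa | hxb
      · exact hxa
      · exact absurd (h hx).2 (hIBB hxb).2
    have hCB : ¬ C ⊆ Bs := by
      intro h
      refine hCdep (hIB.indep.subset fun x hx => ?_)
      rcases hCD hx with hxa | hxb
      · exact absurd (hIAA hxa).2 (h hx).2
      · exact hxb
    obtain ⟨y, hyC, hyA⟩ := not_subset.mp hCA
    obtain ⟨x, hxC, hxB⟩ := not_subset.mp hCB
    have hxA : a x = a j := by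
      by_contra h
      exact hxB ⟨hCL hxC, h⟩
    have hyB : a y ≠ a j := by
      intro h
      exact hyA ⟨hCL hyC, h⟩
    have hxy : x ≠ y := fun h => hyB (h ▸ hxA)
    have := key_exchange hfin hL hconst hCdep hCL hmin hxC hyC hxy
    exact hyB (this ▸ hxA)
  -- IA ∪ IB is a basis of L
  obtain ⟨Jb, hJb, hsub⟩ := hU.subset_isBasis_of_subset
    (union_subset (hIAA.trans hAL) (hIBB.trans hBsL)) hL
  have hJA : Jb ∩ A = IA :=
    (hIA.eq_of_subset_indep (hJb.indep.inter_right A)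
      (subset_inter (subset_union_left.trans hsub) hIAA) inter_subset_right).symm
  have hJB : Jb ∩ Bs = IB :=
    (hIB.eq_of_subset_indep (hJb.indep.inter_right Bs)
      (subset_inter (subset_union_right.trans hsub) hIBB) inter_subset_right).symm
  have hJeq : Jb = IA ∪ IB := by
    rw [← hJA, ← hJB, ← inter_union_distrib_left, hABunion]
    exact (inter_eq_left.mpr hJb.subset).symm
  rw [hJeq] at hJb
  -- ranks
  have hdisjI : Disjoint IA IB := hABdisj.mono hIAA hIBB
  have hIAfin : IA.Finite := hfin.subset hIA.indep.subset_ground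
  have hIBfin : IB.Finite := hfin.subset hIB.indep.subset_ground
  apply h2c
  refine ⟨A, Bs, ⟨j, hj, rfl⟩, ⟨k, hk, fun h => hne h.symm⟩, hABdisj, ?_, ?_⟩
  · rw [restrict_ground_eq, hABunion]
  · rw [restrict_ground_eq, mrank_restrict_eq hAL, mrank_restrict_eq hBsL,
      mrank_restrict_eq (Subset.rfl : L ⊆ L),
      mrank_eq_ncard_of_basis hfin hIA, mrank_eq_ncard_of_basis hfin hIB,
      mrank_eq_ncard_of_basis hfin hJb,
      ncard_union_eq hdisjI hIAfin hIBfin]
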